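/- Let i,j,m ∈ {1,...,n+1} be pairwise distinct. Then in 𝒟_{ℂ^n}[s_1,...,s_{n+1}]: l_m s_j Ũ_{i,j} − l_j s_i Ũ_{j,m} = −(l_i l_j U_{i,j} − U_{i,j}(l_j) l_i s_j) Ũ_{j,m} + (l_j l_m U_{j,m} − U_{j,m}(l_m) l_j s_m) Ũ_{i,j} − l_j Ũ_{i,m}. -/

import Mathlib

open MvPolynomial

/-- The ring `ℂ[x₁,…,xₙ,s₁,…,s_{n+1}]`; `Sum.inl i` is `xᵢ`, `Sum.inr j` is `sⱼ`. -/
abbrev P2 (n : ℕ) := MvPolynomial (Fin n ⊕ Fin (n + 1)) ℂ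

/-- The ring `𝒟_{ℂⁿ}[s₁,…,s_{n+1}]` of differential operators with polynomial
coefficients is realized faithfully by its action on `ℂ[x,s]` :
multiplication by a polynomial. -/
noncomputable def M {n : ℕ} (q : P2 n) : Module.End ℂ (P2 n) := LinearMap.mulLeft ℂ q

/-- A linear form on `ℂⁿ` (with coefficient vector `c`) as a polynomial. -/
noncomputable def lfp {n : ℕ} (c : Fin n → ℂ) : P2 n := ∑ m, C (c m) * X (Sum.inl m)

/-- The variable `sⱼ` as a polynomial. -/
noncomputable def sp {n : ℕ} (j : Fin (n + 1)) : P2 n := X (Sum.inr j)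

/-- The constant vector field `u` as a differential operator (a derivation in the
`x`-variables only). -/
noncomputable def Dv {n : ℕ} (u : Fin n → ℂ) : Module.End ℂ (P2 n) :=
  (mkDerivation ℂ (fun v => Sum.casesOn v (fun m => (C (u m) : P2 n)) fun _ => 0) :
    Derivation ℂ (P2 n) (P2 n))

/-- The value `U(l)` of a constant vector field `u` on the linear form with
coefficient vector `c`. -/
noncomputable def ap {n : ℕ} (u c : Fin n → ℂ) : ℂ := ∑ m, u m * c m

/-- A family of linear forms is generic if every subfamily of `n` of them is
linearly independent. -/
def Generic {n p : ℕ} (l : Fin p → Fin n → ℂ) : Prop :=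
  ∀ S : Finset (Fin p), S.card = n → LinearIndependent ℂ (fun i : S => l i.1)

/-- The operator `Ũ_{i,j} = lᵢ lⱼ U_{i,j} − lⱼ sᵢ − U_{i,j}(lⱼ) lᵢ sⱼ`. -/
noncomputable def Ut {n : ℕ} (l : Fin (n + 1) → Fin n → ℂ)
    (u : Fin (n + 1) → Fin (n + 1) → Fin n → ℂ) (i j : Fin (n + 1)) :
    Module.End ℂ (P2 n) :=
  M (lfp (l i)) * M (lfp (l j)) * Dv (u i j) - M (lfp (l j)) * M (sp i) -
    ap (u i j) (l j) • (M (lfp (l i)) * M (sp j))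

/-- The operator `Ẽ = E − s₁ − ⋯ − s_{n+1}`, `E` being the Euler vector field. -/
noncomputable def Et (n : ℕ) : Module.End ℂ (P2 n) :=
  (∑ i : Fin n, M (X (Sum.inl i)) * Dv (Pi.single i 1)) - ∑ k : Fin (n + 1), M (sp k)

section Lemmas

variable {n : ℕ}

lemma M_mul (p q : P2 n) : M (p * q) = M p * M q := by
  apply LinearMap.ext; intro x
  simp [M, Module.End.mul_apply, mul_assoc]

lemma M_comm (p q : P2 n) : M p * M q = M q * M p := by
  rw [← M_mul, ← M_mul, mul_comm]

lemma M_C (r : ℂ) : M (C r : P2 n) = r • (1 : Module.End ℂ (P2 n)) := by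
  apply LinearMap.ext; intro x
  simp [M, LinearMap.mulLeft_apply, smul_eq_C_mul]

lemma Dv_M (u : Fin n → ℂ) (q : P2 n) : Dv u * M q = M q * Dv u + M (Dv u q) := by
  apply LinearMap.ext; intro p
  simp only [Module.End.mul_apply, LinearMap.add_apply, M, LinearMap.mulLeft_apply, Dv,
    Derivation.coeFn_coe]
  rw [Derivation.leibniz]
  simp [smul_eq_mul, mul_comm]

lemma Dv_lfp (u c : Fin n → ℂ) : Dv u (lfp c) = C (ap u c) := by
  simp only [Dv, lfp, Derivation.coeFn_coe, map_sum]
  rw [ap, map_sum]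
  refine Finset.sum_congr rfl fun m _ => ?_
  rw [Derivation.leibniz, derivation_C, smul_zero, add_zero, mkDerivation_X,
    smul_eq_mul, ← C_mul, mul_comm]

lemma Dv_sp (u : Fin n → ℂ) (k : Fin (n+1)) : Dv u (sp k) = 0 := by
  simp only [Dv, sp, Derivation.coeFn_coe, mkDerivation_X]

lemma Dv_comm (u v : Fin n → ℂ) : Dv u * Dv v = Dv v * Dv u := by
  set D1 : Derivation ℂ (P2 n) (P2 n) :=
    mkDerivation ℂ (fun w => Sum.casesOn w (fun m => (C (u m) : P2 n)) fun _ => 0) with hD1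
  set D2 : Derivation ℂ (P2 n) (P2 n) :=
    mkDerivation ℂ (fun w => Sum.casesOn w (fun m => (C (v m) : P2 n)) fun _ => 0) with hD2
  have h : ⁅D1, D2⁆ = 0 := by
    apply derivation_ext
    intro w
    rw [Derivation.commutator_apply]
    cases w <;> simp [hD1, hD2, mkDerivation_X, derivation_C]
  have h2 : ((⁅D1, D2⁆ : Derivation ℂ (P2 n) (P2 n)) : Module.End ℂ (P2 n)) = 0 := by
    rw [h]; exact Derivation.coe_zero_linearMap
  rw [Derivation.commutator_coe_linear_map, Ring.lie_def] at h2
  have e1 : Dv u = (D1 : Module.End ℂ (P2 n)) := rfl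
  have e2 : Dv v = (D2 : Module.End ℂ (P2 n)) := rfl
  rw [e1, e2]
  exact sub_eq_zero.mp h2

lemma Dv_lin (u v : Fin n → ℂ) (c : ℂ) :
    Dv (fun m => u m - c * v m) = Dv u - c • Dv v := by
  have h : (mkDerivation ℂ (fun w => Sum.casesOn w
        (fun m => (C ((fun m => u m - c * v m) m) : P2 n)) fun _ => 0) :
      Derivation ℂ (P2 n) (P2 n)) =
      mkDerivation ℂ (fun w => Sum.casesOn w (fun m => (C (u m) : P2 n)) fun _ => 0) -
      c • mkDerivation ℂ (fun w => Sum.casesOn w (fun m => (C (v m) : P2 n)) fun _ => 0) := by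
    apply derivation_ext
    intro w
    cases w <;> simp [mkDerivation_X, C_sub, smul_eq_C_mul, C_mul, mul_comm]
  show ((_ : Derivation ℂ (P2 n) (P2 n)) : Module.End ℂ (P2 n)) = _
  rw [h, Derivation.coe_sub_linearMap]
  congr 1
  try exact Derivation.coe_smul_linearMap c _

noncomputable def apL (v : Fin n → ℂ) : (Fin n → ℂ) →ₗ[ℂ] ℂ where
  toFun c := ap v c
  map_add' a b := by simp [ap, mul_add, Finset.sum_add_distrib]
  map_smul' r a := by simp [ap, Finset.mul_sum, mul_left_comm]

lemma ap_single (v : Fin n → ℂ) (k : Fin n) : ap v (Pi.single k 1) = v k := by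
  rw [ap, Finset.sum_eq_single k]
  · simp
  · intro b _ hb; simp [Pi.single_apply, hb]
  · simp

lemma vanish (l : Fin (n + 1) → Fin n → ℂ) (hl : Generic l) (m : Fin (n + 1))
    (v : Fin n → ℂ) (hv : ∀ k, k ≠ m → ap v (l k) = 0) : v = 0 := by
  set S : Finset (Fin (n + 1)) := {m}ᶜ with hS
  have hcard : S.card = n := by
    simp [hS, Finset.card_compl]
  have hli := hl S hcard
  have hspan : Submodule.span ℂ (Set.range fun i : S => l i.1) = ⊤ := by
    apply hli.span_eq_top_of_card_eq_finrank'
    rw [Fintype.card_coe, hcard]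
    simp [Module.finrank_pi]
  have hz : ∀ w : Fin n → ℂ, apL v w = 0 := by
    intro w
    have hw : w ∈ Submodule.span ℂ (Set.range fun i : S => l i.1) := by
      rw [hspan]; trivial
    induction hw using Submodule.span_induction with
    | mem x hx =>
      obtain ⟨⟨k, hk⟩, rfl⟩ := hx
      exact hv k (by simpa [hS, Finset.mem_compl] using hk)
    | zero => simp
    | add x y _ _ hx hy => rw [map_add, hx, hy, add_zero]
    | smul r x _ hx => rw [map_smul, hx, smul_zero]
  funext k
  have := hz (Pi.single k 1)
  rwa [show (apL v) (Pi.single k 1) = v k from ap_single v k] at this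

lemma ap_sub (x y w : Fin n → ℂ) :
    ap (fun t => x t - y t) w = ap x w - ap y w := by
  simp [ap, sub_mul, Finset.sum_sub_distrib]

lemma ap_sub_smul (x y w : Fin n → ℂ) (c : ℂ) :
    ap (fun t => x t - c * y t) w = ap x w - c * ap y w := by
  simp [ap, sub_mul, mul_assoc, Finset.sum_sub_distrib, Finset.mul_sum]

lemma M_zero : M (0 : P2 n) = 0 := by
  apply LinearMap.ext; intro x; simp [M]

lemma key {A : Type*} [Ring A] [Algebra ℂ A] (a b e si sj sm D1 D2 : A) (c1 c2 : ℂ)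
    (hba : b*a = a*b) (hea : e*a = a*e) (heb : e*b = b*e)
    (hsib : si*b = b*si) (hsie : si*e = e*si)
    (hsja : sj*a = a*sj) (hsjb : sj*b = b*sj) (hsje : sj*e = e*sj)
    (hsma : sm*a = a*sm) (hsmb : sm*b = b*sm)
    (hsjsi : sj*si = si*sj) (hsmsi : sm*si = si*sm) (hsmsj : sm*sj = sj*sm)
    (hD1a : D1*a = a*D1 + 1) (hD1b : D1*b = b*D1 + c1•(1:A)) (hD1e : D1*e = e*D1)
    (hD2a : D2*a = a*D2) (hD2b : D2*b = b*D2 + 1) (hD2e : D2*e = e*D2 + c2•(1:A))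
    (hD1si : D1*si = si*D1) (hD1sj : D1*sj = sj*D1) (hD1sm : D1*sm = sm*D1)
    (hD2si : D2*si = si*D2) (hD2sj : D2*sj = sj*D2) (hD2sm : D2*sm = sm*D2)
    (hDD : D2*D1 = D1*D2) :
    (b*e*D2 - e*sj - c2•(b*sm))*(a*b*D1 - b*si - c1•(a*sj))
      - (a*b*D1 - b*si - c1•(a*sj))*(b*e*D2 - e*sj - c2•(b*sm))
    = b*(a*(e*(D1 - c1•D2)) - e*si + (c1*c2)•(a*sm)) := by
  have comm' : ∀ {x y : A}, x*y = y*x → ∀ z, x*(y*z) = y*(x*z) := by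
    intro x y h z; rw [← mul_assoc, h, mul_assoc]
  have aff' : ∀ {x y : A} {c : ℂ}, x*y = y*x + c•(1:A) → ∀ z, x*(y*z) = y*(x*z) + c•z := by
    intro x y c h z; rw [← mul_assoc, h, add_mul, mul_assoc, smul_mul_assoc, one_mul]
  have one' : ∀ {x y : A}, x*y = y*x + 1 → ∀ z, x*(y*z) = y*(x*z) + z := by
    intro x y h z; rw [← mul_assoc, h, add_mul, mul_assoc, one_mul]
  simp only [mul_sub, sub_mul, mul_add, add_mul, smul_mul_assoc, mul_smul_comm, mul_assoc,
    one_mul, mul_one, smul_smul, smul_sub, smul_add, mul_neg, neg_mul,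
    comm' hba, comm' hea, comm' heb, comm' hsib, comm' hsie,
    comm' hsja, comm' hsjb, comm' hsje, comm' hsma, comm' hsmb,
    comm' hsjsi, comm' hsmsi, comm' hsmsj,
    one' hD1a, aff' hD1b, comm' hD1e, comm' hD2a, one' hD2b, aff' hD2e,
    comm' hD1si, comm' hD1sj, comm' hD1sm, comm' hD2si, comm' hD2sj, comm' hD2sm,
    comm' hDD,
    hba, hea, heb, hsib, hsie, hsja, hsjb, hsje, hsma, hsmb,
    hsjsi, hsmsi, hsmsj, hD1a, hD1b, hD1e, hD2a, hD2b, hD2e,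
    hD1si, hD1sj, hD1sm, hD2si, hD2sj, hD2sm, hDD]
  module

end Lemmas

set_option maxHeartbeats 1000000 in
theorem stmt14 (n : ℕ) (l : Fin (n + 1) → Fin n → ℂ) (hl : Generic l)
    (u : Fin (n + 1) → Fin (n + 1) → Fin n → ℂ)
    (hu1 : ∀ a b, a ≠ b → ap (u a b) (l a) = 1)
    (hu0 : ∀ a b, a ≠ b → ∀ k, k ≠ a → k ≠ b → ap (u a b) (l k) = 0)
    (i j m : Fin (n + 1)) (hij : i ≠ j) (him : i ≠ m) (hjm : j ≠ m) :
    M (lfp (l m)) * M (sp j) * Ut l u i j - M (lfp (l j)) * M (sp i) * Ut l u j m =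
      -((M (lfp (l i)) * M (lfp (l j)) * Dv (u i j) -
          ap (u i j) (l j) • (M (lfp (l i)) * M (sp j))) * Ut l u j m) +
        (M (lfp (l j)) * M (lfp (l m)) * Dv (u j m) -
          ap (u j m) (l m) • (M (lfp (l j)) * M (sp m))) * Ut l u i j -
          M (lfp (l j)) * Ut l u i m := by
  set c1 := ap (u i j) (l j) with hc1
  set c2 := ap (u j m) (l m) with hc2
  -- the vector identity u_{im} = u_{ij} - c1 • u_{jm}
  have hvec : u i m = fun t => u i j t - c1 * u j m t := by
    have h0 : (fun t => u i m t - (u i j t - c1 * u j m t)) = 0 := by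
      apply vanish l hl m
      intro k hk
      rw [ap_sub (u i m) (fun t => u i j t - c1 * u j m t) (l k), ap_sub_smul]
      by_cases hki : k = i
      · rw [hki, hu1 i m him, hu1 i j hij, hu0 j m hjm i hij him, mul_zero]
        ring
      · by_cases hkj : k = j
        · rw [hkj, hu0 i m him j hij.symm hjm, ← hc1, hu1 j m hjm, mul_one]
          ring
        · rw [hu0 i m him k hki hk, hu0 i j hij k hki hkj, hu0 j m hjm k hkj hk, mul_zero]
          ring
    funext t
    have h1 := congrFun h0 t
    simp only [Pi.zero_apply, sub_eq_zero] at h1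
    exact h1
  have hD3 : Dv (u i m) = Dv (u i j) - c1 • Dv (u j m) := by
    rw [hvec]; exact Dv_lin _ _ _
  have hc3 : ap (u i m) (l m) = -(c1 * c2) := by
    conv_lhs => rw [hvec]
    rw [ap_sub_smul, hu0 i j hij m him.symm hjm.symm, ← hc2]
    ring
  -- commutation relations
  have hD1a : Dv (u i j) * M (lfp (l i)) = M (lfp (l i)) * Dv (u i j) + 1 := by
    rw [Dv_M, Dv_lfp, hu1 i j hij, M_C, one_smul]
  have hD1b : Dv (u i j) * M (lfp (l j)) = M (lfp (l j)) * Dv (u i j) +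
      c1 • (1 : Module.End ℂ (P2 n)) := by
    rw [Dv_M, Dv_lfp, ← hc1, M_C]
  have hD1e : Dv (u i j) * M (lfp (l m)) = M (lfp (l m)) * Dv (u i j) := by
    rw [Dv_M, Dv_lfp, hu0 i j hij m him.symm hjm.symm, C_0, M_zero, add_zero]
  have hD2a : Dv (u j m) * M (lfp (l i)) = M (lfp (l i)) * Dv (u j m) := by
    rw [Dv_M, Dv_lfp, hu0 j m hjm i hij him, C_0, M_zero, add_zero]
  have hD2b : Dv (u j m) * M (lfp (l j)) = M (lfp (l j)) * Dv (u j m) + 1 := by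
    rw [Dv_M, Dv_lfp, hu1 j m hjm, M_C, one_smul]
  have hD2e : Dv (u j m) * M (lfp (l m)) = M (lfp (l m)) * Dv (u j m) +
      c2 • (1 : Module.End ℂ (P2 n)) := by
    rw [Dv_M, Dv_lfp, ← hc2, M_C]
  have hDs : ∀ (w : Fin n → ℂ) (k : Fin (n+1)), Dv w * M (sp k) = M (sp k) * Dv w := by
    intro w k
    rw [Dv_M, Dv_sp, M_zero, add_zero]
  -- the commutator identity
  have hcomm : Ut l u j m * Ut l u i j - Ut l u i j * Ut l u j m =
      M (lfp (l j)) * Ut l u i m := by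
    have hUt1 : Ut l u i j = M (lfp (l i)) * M (lfp (l j)) * Dv (u i j) -
        M (lfp (l j)) * M (sp i) - c1 • (M (lfp (l i)) * M (sp j)) := by
      rw [Ut, ← hc1]
    have hUt2 : Ut l u j m = M (lfp (l j)) * M (lfp (l m)) * Dv (u j m) -
        M (lfp (l m)) * M (sp j) - c2 • (M (lfp (l j)) * M (sp m)) := by
      rw [Ut, ← hc2]
    have hUt3 : M (lfp (l j)) * Ut l u i m =
        M (lfp (l j)) * (M (lfp (l i)) * (M (lfp (l m)) *
          (Dv (u i j) - c1 • Dv (u j m))) - M (lfp (l m)) * M (sp i) +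
          (c1 * c2) • (M (lfp (l i)) * M (sp m))) := by
      rw [Ut, hD3, hc3, mul_assoc (M (lfp (l i)))]
      refine congrArg (M (lfp (l j)) * ·) ?_
      module
    rw [hUt1, hUt2, hUt3]
    exact key (M (lfp (l i))) (M (lfp (l j))) (M (lfp (l m))) (M (sp i)) (M (sp j))
      (M (sp m)) (Dv (u i j)) (Dv (u j m)) c1 c2
      (M_comm _ _) (M_comm _ _) (M_comm _ _) (M_comm _ _) (M_comm _ _) (M_comm _ _)
      (M_comm _ _) (M_comm _ _) (M_comm _ _) (M_comm _ _) (M_comm _ _) (M_comm _ _)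
      (M_comm _ _)
      hD1a hD1b hD1e hD2a hD2b hD2e
      (hDs _ _) (hDs _ _) (hDs _ _) (hDs _ _) (hDs _ _) (hDs _ _)
      (Dv_comm _ _)
  -- assemble
  have e1 : M (lfp (l i)) * M (lfp (l j)) * Dv (u i j) -
      c1 • (M (lfp (l i)) * M (sp j)) = Ut l u i j + M (lfp (l j)) * M (sp i) := by
    rw [Ut, ← hc1]; abel
  have e2 : M (lfp (l j)) * M (lfp (l m)) * Dv (u j m) -
      c2 • (M (lfp (l j)) * M (sp m)) = Ut l u j m + M (lfp (l m)) * M (sp j) := by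
    rw [Ut, ← hc2]; abel
  rw [e1, e2, add_mul, add_mul, ← hcomm]
  abel
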